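/- Let z ≥ 1 and let b₁, …, b_z be positive reals with b_i < c for all i, where c ≥ 3 is an integer. Set S = ∑ b_i and F₁ = ∑ b_i². Let P(x) = x³ − (c+1)x² + (c − S)x + (cS − F₁). Then P has three simple real roots ξ > c, ξ₂ ∈ (0, c), ξ₃ < 0, and ξ has strictly greater absolute value than ξ₂ and ξ₃. -/

import Mathlib

/-- With `S = ∑ bᵢ`, `F₁ = ∑ bᵢ²` for positive reals `bᵢ < c`, the cubic
`P(x) = x³ − (c+1)x² + (c−S)x + (cS−F₁)` has three simple real roots `ξ > c`,
`ξ₂ ∈ (0, c)`, `ξ₃ < 0`, and `ξ` has strictly greater absolute value than the others. -/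
theorem cubic_three_real_roots (c z : ℕ) (hc : 3 ≤ c) (hz : 1 ≤ z)
    (b : Fin z → ℝ) (hb : ∀ i, 0 < b i ∧ b i < c)
    (S F₁ : ℝ) (hS : S = ∑ i, b i) (hF : F₁ = ∑ i, b i ^ 2)
    (P : ℝ → ℝ)
    (hP : ∀ x, P x = x ^ 3 - (c + 1) * x ^ 2 + (c - S) * x + (c * S - F₁)) :
    ∃ ξ ξ₂ ξ₃ : ℝ, P ξ = 0 ∧ P ξ₂ = 0 ∧ P ξ₃ = 0 ∧
      (c : ℝ) < ξ ∧ 0 < ξ₂ ∧ ξ₂ < c ∧ ξ₃ < 0 ∧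
      deriv P ξ ≠ 0 ∧ deriv P ξ₂ ≠ 0 ∧ deriv P ξ₃ ≠ 0 ∧
      |ξ₂| < ξ ∧ |ξ₃| < ξ := by
  haveI : Nonempty (Fin z) := Fin.pos_iff_nonempty.mp hz
  have hcR : (3 : ℝ) ≤ (c : ℝ) := by exact_mod_cast hc
  have hS0 : 0 < S := by
    rw [hS]
    exact Finset.sum_pos (fun i _ => (hb i).1) Finset.univ_nonempty
  have hF0 : 0 < F₁ := by
    rw [hF]
    exact Finset.sum_pos (fun i _ => pow_pos (hb i).1 2) Finset.univ_nonempty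
  have hcSF : F₁ < (c : ℝ) * S := by
    rw [hF, hS, Finset.mul_sum]
    apply Finset.sum_lt_sum_of_nonempty Finset.univ_nonempty
    intro i _
    have h1 := (hb i).1
    have h2 := (hb i).2
    nlinarith
  -- key values of P
  have hP0 : 0 < P 0 := by rw [hP]; nlinarith
  have hPc : P (c : ℝ) < 0 := by rw [hP]; nlinarith
  have hPa : P (-(S + 1)) < 0 := by
    rw [hP]
    nlinarith [sq_nonneg S, mul_pos hS0 hS0]
  obtain ⟨M, hM⟩ : ∃ M : ℝ, M = (c : ℝ) + S + F₁ + 1 := ⟨_, rfl⟩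
  have hM4 : 4 ≤ M := by rw [hM]; linarith
  have h1 : F₁ < M ^ 2 - M - S := by nlinarith [sq_nonneg (M - 4)]
  have hPM : 0 < P M := by
    rw [hP]
    have h2 : 0 < (M - (c : ℝ)) * (M ^ 2 - M - S) - F₁ := by
      have hMc : M - (c : ℝ) = S + F₁ + 1 := by rw [hM]; ring
      rw [hMc]
      nlinarith [mul_pos (add_pos hS0 hF0) (show (0:ℝ) < M ^ 2 - M - S by linarith)]
    nlinarith [h2]
  have hPfun : P = fun x => x ^ 3 - ((c : ℝ) + 1) * x ^ 2 + ((c : ℝ) - S) * x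
      + ((c : ℝ) * S - F₁) := funext hP
  have hcont : ContinuousOn P (Set.univ) := by
    rw [hPfun]; fun_prop
  -- roots via IVT
  have hroot1 : ∃ ξ ∈ Set.Ioo ((c : ℝ)) M, P ξ = 0 := by
    have hle : (c : ℝ) ≤ M := by simp only [hM]; nlinarith
    have := intermediate_value_Ioo hle (hcont.mono (Set.subset_univ _))
    have h0 : (0 : ℝ) ∈ Set.Ioo (P (c : ℝ)) (P M) := ⟨hPc, hPM⟩
    obtain ⟨x, hx, hPx⟩ := this h0
    exact ⟨x, hx, hPx⟩
  have hroot2 : ∃ ξ ∈ Set.Ioo (0 : ℝ) ((c : ℝ)), P ξ = 0 := by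
    have hle : (0 : ℝ) ≤ (c : ℝ) := by linarith
    have := intermediate_value_Ioo' hle (hcont.mono (Set.subset_univ _))
    have h0 : (0 : ℝ) ∈ Set.Ioo (P (c : ℝ)) (P 0) := ⟨hPc, hP0⟩
    obtain ⟨x, hx, hPx⟩ := this h0
    exact ⟨x, hx, hPx⟩
  have hroot3 : ∃ ξ ∈ Set.Ioo (-(S + 1)) (0 : ℝ), P ξ = 0 := by
    have hle : (-(S + 1)) ≤ (0 : ℝ) := by linarith
    have := intermediate_value_Ioo hle (hcont.mono (Set.subset_univ _))
    have h0 : (0 : ℝ) ∈ Set.Ioo (P (-(S + 1))) (P 0) := ⟨hPa, hP0⟩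
    obtain ⟨x, hx, hPx⟩ := this h0
    exact ⟨x, hx, hPx⟩
  obtain ⟨ξ, ⟨hξc, hξM⟩, hPξ⟩ := hroot1
  obtain ⟨ξ₂, ⟨hξ₂0, hξ₂c⟩, hPξ₂⟩ := hroot2
  obtain ⟨ξ₃, ⟨hξ₃a, hξ₃0⟩, hPξ₃⟩ := hroot3
  have hne12 : ξ - ξ₂ ≠ 0 := sub_ne_zero.mpr (by intro h; rw [h] at hξc; linarith)
  have hne13 : ξ - ξ₃ ≠ 0 := sub_ne_zero.mpr (by intro h; rw [h] at hξc; linarith)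
  have hne23 : ξ₂ - ξ₃ ≠ 0 := sub_ne_zero.mpr (by intro h; rw [h] at hξ₂0; linarith)
  -- equations
  have e1 : ξ ^ 3 - ((c : ℝ) + 1) * ξ ^ 2 + ((c : ℝ) - S) * ξ + ((c : ℝ) * S - F₁) = 0 := by
    rw [← hP]; exact hPξ
  have e2 : ξ₂ ^ 3 - ((c : ℝ) + 1) * ξ₂ ^ 2 + ((c : ℝ) - S) * ξ₂ + ((c : ℝ) * S - F₁) = 0 := by
    rw [← hP]; exact hPξ₂
  have e3 : ξ₃ ^ 3 - ((c : ℝ) + 1) * ξ₃ ^ 2 + ((c : ℝ) - S) * ξ₃ + ((c : ℝ) * S - F₁) = 0 := by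
    rw [← hP]; exact hPξ₃
  have h12 : ξ ^ 2 + ξ * ξ₂ + ξ₂ ^ 2 - ((c : ℝ) + 1) * (ξ + ξ₂) + ((c : ℝ) - S) = 0 :=
    mul_left_cancel₀ hne12 (by linear_combination e1 - e2)
  have h13 : ξ ^ 2 + ξ * ξ₃ + ξ₃ ^ 2 - ((c : ℝ) + 1) * (ξ + ξ₃) + ((c : ℝ) - S) = 0 :=
    mul_left_cancel₀ hne13 (by linear_combination e1 - e3)
  have hvp : (c : ℝ) + 1 = ξ + ξ₂ + ξ₃ :=
    mul_left_cancel₀ hne23 (by linear_combination h13 - h12)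
  have hvq : (c : ℝ) - S = ξ * ξ₂ + ξ * ξ₃ + ξ₂ * ξ₃ := by
    linear_combination h12 + (ξ + ξ₂) * hvp
  -- derivative
  have hderiv : ∀ r : ℝ, deriv P r = 3 * r ^ 2 - 2 * ((c : ℝ) + 1) * r + ((c : ℝ) - S) := by
    intro r
    have h : HasDerivAt P (3 * r ^ 2 - 2 * ((c : ℝ) + 1) * r + ((c : ℝ) - S)) r := by
      rw [hPfun]
      have h3 := hasDerivAt_pow 3 r
      have h2 := (hasDerivAt_pow 2 r).const_mul ((c : ℝ) + 1)
      have hid := (hasDerivAt_id r).const_mul ((c : ℝ) - S)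
      have := ((h3.sub h2).add hid).add_const ((c : ℝ) * S - F₁)
      refine (this.congr_of_eventuallyEq (Filter.Eventually.of_forall fun x => ?_)).congr_deriv ?_
      · simp only [Pi.add_apply, Pi.sub_apply, id]
      · push_cast; ring
    exact h.deriv
  refine ⟨ξ, ξ₂, ξ₃, hPξ, hPξ₂, hPξ₃, hξc, hξ₂0, hξ₂c, hξ₃0, ?_, ?_, ?_, ?_, ?_⟩
  · rw [hderiv]
    have : 3 * ξ ^ 2 - 2 * ((c : ℝ) + 1) * ξ + ((c : ℝ) - S) = (ξ - ξ₂) * (ξ - ξ₃) := by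
      linear_combination (-2 * ξ) * hvp + hvq
    rw [this]
    exact mul_ne_zero hne12 hne13
  · rw [hderiv]
    have : 3 * ξ₂ ^ 2 - 2 * ((c : ℝ) + 1) * ξ₂ + ((c : ℝ) - S) = (ξ₂ - ξ) * (ξ₂ - ξ₃) := by
      linear_combination (-2 * ξ₂) * hvp + hvq
    rw [this]
    exact mul_ne_zero (by intro h; exact hne12 (by linarith [sub_eq_zero.mp h])) hne23
  · rw [hderiv]
    have : 3 * ξ₃ ^ 2 - 2 * ((c : ℝ) + 1) * ξ₃ + ((c : ℝ) - S) = (ξ₃ - ξ) * (ξ₃ - ξ₂) := by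
      linear_combination (-2 * ξ₃) * hvp + hvq
    rw [this]
    refine mul_ne_zero ?_ ?_
    · intro h; exact hne13 (by linarith [sub_eq_zero.mp h])
    · intro h; exact hne23 (by linarith [sub_eq_zero.mp h])
  · rw [abs_of_pos hξ₂0]; linarith
  · rw [abs_of_neg hξ₃0]; linarith [hvp]
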